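/- arXiv:1108.4859 — 2 statements merged into one kernel-verified Lean document; each statement's English description precedes it below -/
import Mathlib

section
/- Let φ(x) = sech x and let S be the real-linear operator S ρ = (1/2)ρ - (1/2)ρ'' - 2φ²ρ - φ² conj(ρ). Then S applied to the function x ↦ φ(x) + x φ'(x) equals -φ; that is, S(φ + xφ') = -φ pointwise on ℝ. (In the notation of the paper, S(∂_μ φ) = J^{-1} ∂_θ φ.) -/
open Real MeasureTheory

/-- The ground-state profile `φ(x) = sech x`, as a complex-valued function. -/
noncomputable def phiC (x : ℝ) : ℂ := ((1 / Real.cosh x : ℝ) : ℂ)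

/-- The real-linear linearized operator `Sρ = (1/2)ρ - (1/2)ρ″ - 2φ²ρ - φ² conj(ρ)`. -/
noncomputable def Sop (ρ : ℝ → ℂ) (x : ℝ) : ℂ :=
  (1 / 2) * ρ x - (1 / 2) * deriv (deriv ρ) x
    - 2 * (phiC x) ^ 2 * ρ x - (phiC x) ^ 2 * (starRingEnd ℂ) (ρ x)

noncomputable def phiR (x : ℝ) : ℝ := 1 / Real.cosh x
noncomputable def phi1 (x : ℝ) : ℝ := -Real.sinh x / Real.cosh x ^ 2
noncomputable def phi2 (x : ℝ) : ℝ := (2 * Real.sinh x ^ 2 - Real.cosh x ^ 2) / Real.cosh x ^ 3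
noncomputable def phi3 (x : ℝ) : ℝ :=
  (5 * Real.sinh x * Real.cosh x ^ 2 - 6 * Real.sinh x ^ 3) / Real.cosh x ^ 4
noncomputable def rhoR (x : ℝ) : ℝ := phiR x + x * phi1 x
noncomputable def rho1 (x : ℝ) : ℝ := 2 * phi1 x + x * phi2 x
noncomputable def rho2 (x : ℝ) : ℝ := 3 * phi2 x + x * phi3 x

lemma cosh_ne (x : ℝ) : Real.cosh x ≠ 0 := (Real.cosh_pos x).ne'

lemma hasDerivAt_phiR (x : ℝ) : HasDerivAt phiR (phi1 x) x := by
  have h := (hasDerivAt_const x (1 : ℝ)).div (Real.hasDerivAt_cosh x) (cosh_ne x)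
  refine h.congr_deriv ?_
  unfold phi1
  field_simp
  ring

lemma hasDerivAt_phi1 (x : ℝ) : HasDerivAt phi1 (phi2 x) x := by
  have h := ((Real.hasDerivAt_sinh x).neg).div
    (((Real.hasDerivAt_cosh x).pow 2)) (pow_ne_zero 2 (cosh_ne x))
  refine h.congr_deriv ?_
  unfold phi2
  simp only [Pi.pow_apply, Pi.neg_apply]
  field_simp
  ring

lemma hasDerivAt_phi2 (x : ℝ) : HasDerivAt phi2 (phi3 x) x := by
  have hnum : HasDerivAt (fun y => 2 * Real.sinh y ^ 2 - Real.cosh y ^ 2)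
      (2 * (2 * Real.sinh x ^ (2 - 1) * Real.cosh x) - 2 * Real.cosh x ^ (2 - 1) * Real.sinh x) x :=
    (((Real.hasDerivAt_sinh x).pow 2).const_mul 2).sub ((Real.hasDerivAt_cosh x).pow 2)
  have h := hnum.div ((Real.hasDerivAt_cosh x).pow 3) (pow_ne_zero 3 (cosh_ne x))
  refine h.congr_deriv ?_
  unfold phi3
  simp only [Pi.pow_apply, Pi.neg_apply]
  field_simp
  ring

lemma hasDerivAt_rhoR (x : ℝ) : HasDerivAt rhoR (rho1 x) x := by
  have h := (hasDerivAt_phiR x).add ((hasDerivAt_id x).mul (hasDerivAt_phi1 x))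
  refine h.congr_deriv ?_
  unfold rho1
  simp only [id_eq]
  ring

lemma hasDerivAt_rho1 (x : ℝ) : HasDerivAt rho1 (rho2 x) x := by
  have h := ((hasDerivAt_phi1 x).const_mul 2).add ((hasDerivAt_id x).mul (hasDerivAt_phi2 x))
  refine h.congr_deriv ?_
  unfold rho2
  simp only [id_eq]
  ring

lemma deriv_phiC (x : ℝ) : deriv phiC x = ((phi1 x : ℝ) : ℂ) :=
  ((hasDerivAt_phiR x).ofReal_comp).deriv

lemma rhoC_eq : (fun y : ℝ => phiC y + (y : ℂ) * deriv phiC y)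
    = fun y : ℝ => ((rhoR y : ℝ) : ℂ) := by
  funext y
  rw [deriv_phiC]
  unfold phiC rhoR phiR
  push_cast
  ring

lemma deriv_rhoC (x : ℝ) :
    deriv (fun y : ℝ => phiC y + (y : ℂ) * deriv phiC y) x = ((rho1 x : ℝ) : ℂ) := by
  rw [rhoC_eq]
  exact ((hasDerivAt_rhoR x).ofReal_comp).deriv

lemma deriv2_rhoC (x : ℝ) :
    deriv (deriv (fun y : ℝ => phiC y + (y : ℂ) * deriv phiC y)) x = ((rho2 x : ℝ) : ℂ) := by
  have : deriv (fun y : ℝ => phiC y + (y : ℂ) * deriv phiC y)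
      = fun y : ℝ => ((rho1 y : ℝ) : ℂ) := funext deriv_rhoC
  rw [this]
  exact ((hasDerivAt_rho1 x).ofReal_comp).deriv

lemma real_identity (x : ℝ) :
    (1 / 2) * rhoR x - (1 / 2) * rho2 x - 2 * phiR x ^ 2 * rhoR x - phiR x ^ 2 * rhoR x
      = -phiR x := by
  have hs2 : Real.sinh x ^ 2 = Real.cosh x ^ 2 - 1 := by
    have h := Real.cosh_sq_sub_sinh_sq x; linarith
  have hc := cosh_ne x
  unfold rhoR rho2 phiR phi1 phi2 phi3
  rw [show Real.sinh x ^ 3 = Real.sinh x * Real.sinh x ^ 2 from by ring, hs2]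
  field_simp
  ring

/-- `S(φ + xφ') = -φ` pointwise on ℝ (in the notation of the paper, `S(∂_μφ) = J⁻¹∂_θφ`). -/
theorem S_of_phi_add_xphi' :
    ∀ x : ℝ, Sop (fun y : ℝ => phiC y + (y : ℂ) * deriv phiC y) x = -phiC x := by
  intro x
  have key := real_identity x
  have hrho : phiC x + (x : ℂ) * ((phi1 x : ℝ) : ℂ) = ((rhoR x : ℝ) : ℂ) := by
    unfold phiC rhoR phiR
    push_cast
    ring
  have hphi : phiC x = ((phiR x : ℝ) : ℂ) := rfl
  simp only [Sop]
  rw [deriv2_rhoC]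
  simp only [deriv_phiC]
  rw [hrho, hphi, Complex.conj_ofReal]
  have keyC := congrArg (fun t : ℝ => (t : ℂ)) key
  push_cast at keyC
  linear_combination keyC
end

section
/- Let φ(x) = sech x. For every σ ∈ ℝ with |σ| < 1 there exists a constant C > 0 such that for all G ∈ H²(ℝ, ℂ): ‖G‖_{H²} ≤ C ( ‖ (1/2)(1-σ²)G + σG' - (1/2)G'' - 2φ²G - φ² conj(G) ‖_{L²} + ‖ e^{-2|x|} G ‖_{L²} ). (The differential operator appearing here is the conjugation e^{σx} S e^{-σx} of the linearized operator S.) -/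
open Real MeasureTheory Filter

/-- The real `L²` pairing `⟨f, g⟩ = Re ∫ f conj(g)`. -/
noncomputable def rip (f g : ℝ → ℂ) : ℝ := (∫ x : ℝ, f x * (starRingEnd ℂ) (g x)).re

lemma re_star_comm (z w : ℂ) : (z * star w).re = (w * star z).re := by
  have h : z * star w = star (w * star z) := by rw [star_mul, star_star]
  rw [h, Complex.star_def, Complex.conj_re]

lemma integral_deriv_zero' (f f' : ℝ → ℝ) (hd : ∀ x, HasDerivAt f (f' x) x)
    (hf : Integrable f) (hf' : Integrable f') : (∫ x : ℝ, f' x) = 0 := by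
  have htop : Tendsto f atTop (nhds 0) :=
    tendsto_zero_of_hasDerivAt_of_integrableOn_Ioi (a := 0) (fun x _ => hd x)
      hf'.integrableOn hf.integrableOn
  have hbot : Tendsto f atBot (nhds 0) :=
    tendsto_zero_of_hasDerivAt_of_integrableOn_Iic (a := 0) (fun x _ => hd x)
      hf'.integrableOn hf.integrableOn
  have h1 : ∫ x in Set.Ioi (0:ℝ), f' x = 0 - f 0 :=
    integral_Ioi_of_hasDerivAt_of_tendsto (hd 0).continuousAt.continuousWithinAt
      (fun x _ => hd x) hf'.integrableOn htop
  have h2 : ∫ x in Set.Iic (0:ℝ), f' x = f 0 - 0 :=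
    integral_Iic_of_hasDerivAt_of_tendsto (hd 0).continuousAt.continuousWithinAt
      (fun x _ => hd x) hf'.integrableOn hbot
  rw [← intervalIntegral.integral_Iic_add_Ioi (hf'.integrableOn) (hf'.integrableOn), h1, h2]
  ring

lemma memL2_int_sq {f : ℝ → ℂ} (hf : MemLp f 2 volume) :
    Integrable (fun x => ‖f x‖ ^ 2) := (memLp_two_iff_integrable_sq_norm hf.1).1 hf

lemma mul_norm_integrable {f g : ℝ → ℂ} (hf : MemLp f 2 volume) (hg : MemLp g 2 volume) :
    Integrable (fun x => ‖f x‖ * ‖g x‖) := by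
  have hint : Integrable (fun x => (‖f x‖ ^ 2 + ‖g x‖ ^ 2) / 2) volume := by
    have := ((memL2_int_sq hf).add (memL2_int_sq hg)).div_const 2
    simpa [Pi.add_apply] using this
  refine Integrable.mono' hint
    (hf.1.norm.mul hg.1.norm) (Filter.Eventually.of_forall fun x => ?_)
  have h1 := norm_nonneg (f x); have h2 := norm_nonneg (g x)
  rw [Real.norm_of_nonneg (by positivity)]
  nlinarith [sq_nonneg (‖f x‖ - ‖g x‖)]

lemma cs_nonneg (f g : ℝ → ℝ) (hf0 : ∀ x, 0 ≤ f x) (hg0 : ∀ x, 0 ≤ g x)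
    (hf : MemLp f 2 volume) (hg : MemLp g 2 volume) :
    ∫ x : ℝ, f x * g x ≤ Real.sqrt (∫ x : ℝ, f x ^ 2) * Real.sqrt (∫ x : ℝ, g x ^ 2) := by
  have hpq : Real.HolderConjugate 2 2 := Real.HolderConjugate.two_two
  have h2 : ENNReal.ofReal (2:ℝ) = 2 := by simp
  have h := integral_mul_le_Lp_mul_Lq_of_nonneg hpq
    (Filter.Eventually.of_forall hf0) (Filter.Eventually.of_forall hg0)
    (h2 ▸ hf) (h2 ▸ hg)
  have hpow : ∀ h : ℝ → ℝ, (∫ x : ℝ, h x ^ (2:ℝ)) = ∫ x : ℝ, h x ^ 2 := by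
    intro h; congr 1; funext x
    rw [show (2:ℝ) = ((2:ℕ):ℝ) by norm_num, Real.rpow_natCast]
  rw [hpow f, hpow g] at h
  rw [Real.sqrt_eq_rpow, Real.sqrt_eq_rpow]
  exact h

lemma cs2 {f g : ℝ → ℂ} (hf : MemLp f 2 volume) (hg : MemLp g 2 volume) :
    ∫ x : ℝ, ‖f x‖ * ‖g x‖ ≤
      Real.sqrt (∫ x : ℝ, ‖f x‖ ^ 2) * Real.sqrt (∫ x : ℝ, ‖g x‖ ^ 2) :=
  cs_nonneg _ _ (fun _ => norm_nonneg _) (fun _ => norm_nonneg _) hf.norm hg.norm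

lemma intRe {f g : ℝ → ℂ} (hf : MemLp f 2 volume) (hg : MemLp g 2 volume) :
    Integrable (fun x => (f x * star (g x)).re) := by
  refine Integrable.mono' (mul_norm_integrable hf hg)
    (Complex.continuous_re.comp_aestronglyMeasurable
      (hf.1.mul (Continuous.comp_aestronglyMeasurable continuous_star hg.1)))
    (Filter.Eventually.of_forall fun x => ?_)
  rw [Real.norm_eq_abs]
  calc |(f x * star (g x)).re| ≤ ‖f x * star (g x)‖ := Complex.abs_re_le_norm _
  _ = ‖f x‖ * ‖g x‖ := by rw [norm_mul, norm_star]

lemma intRe_bound {f g : ℝ → ℂ} (hf : MemLp f 2 volume) (hg : MemLp g 2 volume) :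
    ∫ x : ℝ, (f x * star (g x)).re ≤
      Real.sqrt (∫ x : ℝ, ‖f x‖ ^ 2) * Real.sqrt (∫ x : ℝ, ‖g x‖ ^ 2) := by
  refine le_trans (integral_mono (intRe hf hg) (mul_norm_integrable hf hg) fun x => ?_)
    (cs2 hf hg)
  calc (f x * star (g x)).re ≤ |(f x * star (g x)).re| := le_abs_self _
  _ ≤ ‖f x * star (g x)‖ := Complex.abs_re_le_norm _
  _ = ‖f x‖ * ‖g x‖ := by rw [norm_mul, norm_star]

lemma sech_le (x : ℝ) : 1 / Real.cosh x ≤ 2 * Real.exp (-|x|) := by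
  have hc := Real.cosh_pos (x := x)
  have h1 : Real.exp |x| ≤ 2 * Real.cosh x := by
    rw [Real.cosh_eq]
    rcases abs_cases x with ⟨h, _⟩ | ⟨h, _⟩ <;> rw [h] <;>
      [nlinarith [Real.exp_pos (-x)]; nlinarith [Real.exp_pos x]]
  have h2 : Real.exp (-|x|) * Real.exp |x| = 1 := by rw [← Real.exp_add]; simp
  rw [div_le_iff₀ hc]
  nlinarith [Real.exp_pos (-|x|)]

lemma sech_sq_le (x : ℝ) : (1 / Real.cosh x) ^ 2 ≤ 4 * Real.exp (-2 * |x|) := by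
  have h := sech_le x
  have h0 : 0 ≤ 1 / Real.cosh x := by positivity
  have he : Real.exp (-2 * |x|) = Real.exp (-|x|) ^ 2 := by
    rw [← Real.exp_nat_mul]; ring_nf
  rw [he]; nlinarith [Real.exp_pos (-|x|)]

lemma sech_le_one (x : ℝ) : 1 / Real.cosh x ≤ 1 := by
  rw [div_le_one (Real.cosh_pos x)]; exact Real.one_le_cosh x

lemma hasDerivAt_cre {f : ℝ → ℂ} {f' : ℂ} {x : ℝ} (h : HasDerivAt f f' x) :
    HasDerivAt (fun y => (f y).re) f'.re x := by
  exact Complex.reCLM.hasFDerivAt.comp_hasDerivAt x h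

lemma re_mul_star_self (z : ℂ) : (z * star z).re = ‖z‖ ^ 2 := by
  rw [Complex.star_def, Complex.mul_conj]
  rw [Complex.normSq_eq_norm_sq]
  rw [Complex.ofReal_re]

lemma key_alg (kk ss qq : ℝ) (g g1 g2 : ℂ) :
    ((((kk:ℝ):ℂ) * g + ((ss:ℝ):ℂ) * g1 - (1/2) * g2 - 2*((qq:ℝ):ℂ)^2 * g
        - ((qq:ℝ):ℂ)^2 * star g) * star g).re
      = kk * (g * star g).re + ss * (g1 * star g).re - (1/2) * (g2 * star g).re
        - (2 * qq^2 * (g * star g).re + qq^2 * ((star g)^2).re) := by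
  simp only [Complex.star_def, Complex.add_re, Complex.sub_re, Complex.mul_re, Complex.mul_im,
    Complex.add_im, Complex.sub_im, Complex.conj_re, Complex.conj_im, Complex.ofReal_re,
    Complex.ofReal_im, pow_two, Complex.div_re, Complex.div_im, Complex.normSq_apply,
    Complex.one_re, Complex.one_im, Complex.re_ofNat, Complex.im_ofNat]
  ring

lemma tri5 (A B C D E : ℂ) : ‖A+B-C-D-E‖ ≤ ‖A‖+‖B‖+‖C‖+‖D‖+‖E‖ :=
  calc ‖A+B-C-D-E‖ ≤ ‖A+B-C-D‖ + ‖E‖ := norm_sub_le _ _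
  _ ≤ ‖A+B-C‖+‖D‖+‖E‖ := by linarith [norm_sub_le (A+B-C) D]
  _ ≤ ‖A+B‖+‖C‖+‖D‖+‖E‖ := by linarith [norm_sub_le (A+B) C]
  _ ≤ ‖A‖+‖B‖+‖C‖+‖D‖+‖E‖ := by linarith [norm_add_le A B]

set_option maxHeartbeats 1000000 in
/-- Elliptic estimate for the conjugated operator `e^{σx} S e^{-σx}` for `|σ| < 1`:
`‖G‖_{H²} ≲ ‖e^{σx}Se^{-σx}G‖_{L²} + ‖e^{-2|x|}G‖_{L²}`. -/
theorem conjugated_S_elliptic_estimate (σ : ℝ) (hσ : |σ| < 1) :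
    ∃ C : ℝ, 0 < C ∧
      ∀ G : ℝ → ℂ,
        Differentiable ℝ G → Differentiable ℝ (deriv G) →
        MemLp G 2 volume → MemLp (deriv G) 2 volume →
        MemLp (deriv (deriv G)) 2 volume →
        Real.sqrt (∫ x : ℝ, ‖G x‖ ^ 2 + ‖deriv G x‖ ^ 2 + ‖deriv (deriv G) x‖ ^ 2)
          ≤ C * (Real.sqrt (∫ x : ℝ,
                ‖(((1 / 2) * (1 - σ ^ 2) : ℝ) : ℂ) * G x + (σ : ℂ) * deriv G x
                  - (1 / 2) * deriv (deriv G) x - 2 * (phiC x) ^ 2 * G x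
                  - (phiC x) ^ 2 * (starRingEnd ℂ) (G x)‖ ^ 2)
              + Real.sqrt (∫ x : ℝ, ‖Real.exp (-2 * |x|) * G x‖ ^ 2)) := by
  set κ : ℝ := (1 / 2) * (1 - σ ^ 2) with hκdef
  have hκ : 0 < κ := by
    have h : σ ^ 2 < 1 := by rwa [sq_lt_one_iff_abs_lt_one]
    rw [hκdef]; linarith only [h]
  have hs0 : 0 ≤ |σ| := abs_nonneg σ
  set t : ℝ := Real.sqrt (2 / κ) with htdef
  have ht0 : 0 ≤ t := Real.sqrt_nonneg _
  have ht2 : t ^ 2 = 2 / κ := Real.sq_sqrt (by positivity)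
  have h1κ : 0 < 1 / κ := by positivity
  set D : ℝ := 1/κ + t + (2 + (2*κ+6)*(1/κ) + 2*t) with hDdef
  have hD0 : 0 < D := by rw [hDdef]; positivity
  refine ⟨12 * D + 1, by linarith only [hD0], ?_⟩
  intro G hG hG' hGm hG1m hG2m
  set G1 := deriv G with hG1def
  set G2 := deriv G1 with hG2def
  have hGc : Continuous G := hG.continuous
  have hG1c : Continuous G1 := hG'.continuous
  have hd1 : ∀ x, HasDerivAt G (G1 x) x := fun x => (hG x).hasDerivAt
  have hd2 : ∀ x, HasDerivAt G1 (G2 x) x := fun x => (hG' x).hasDerivAt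
  set q : ℝ → ℝ := fun x => 1 / Real.cosh x with hqdef
  have hq0 : ∀ x, 0 ≤ q x := fun x => by rw [hqdef]; positivity
  have hq1 : ∀ x, q x ≤ 1 := fun x => sech_le_one x
  have hqc : Continuous q :=
    continuous_const.div Real.continuous_cosh (fun x => (Real.cosh_pos x).ne')
  have hphi : ∀ x, phiC x = ((q x : ℝ) : ℂ) := fun _ => rfl
  have hphin : ∀ x, ‖phiC x‖ ≤ 1 := fun x => by
    rw [hphi x, Complex.norm_real, Real.norm_eq_abs, abs_of_nonneg (hq0 x)]; exact hq1 x
  have hq4 : ∀ x, q x ^ 2 ≤ 4 * Real.exp (-2 * |x|) := fun x => sech_sq_le x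
  set L : ℝ → ℂ := fun x =>
      ((κ : ℝ) : ℂ) * G x + (σ : ℂ) * G1 x
        - (1 / 2) * G2 x - 2 * (phiC x) ^ 2 * G x
        - (phiC x) ^ 2 * (starRingEnd ℂ) (G x) with hLdef
  set W : ℝ → ℂ := fun x => ((Real.exp (-2 * |x|) : ℝ) : ℂ) * G x with hWdef
  -- MemLp facts
  have hexpc : Continuous (fun x : ℝ => Real.exp (-2 * |x|)) :=
    Real.continuous_exp.comp (continuous_const.mul continuous_abs)
  have hWc : Continuous W := (Complex.continuous_ofReal.comp hexpc).mul hGc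
  have hWm : MemLp W 2 volume := by
    refine MemLp.of_le hGm hWc.aestronglyMeasurable (Filter.Eventually.of_forall fun x => ?_)
    rw [hWdef]
    simp only [norm_mul, Complex.norm_real, Real.norm_eq_abs, Real.abs_exp]
    have h5 : Real.exp (-2 * |x|) ≤ 1 :=
      Real.exp_le_one_iff.2 (by linarith only [abs_nonneg x])
    have h6 := mul_le_mul_of_nonneg_right h5 (norm_nonneg (G x))
    linarith only [h6]
  have hphicc : Continuous phiC := Complex.continuous_ofReal.comp hqc
  have hm4 : MemLp (fun x => 2 * (phiC x) ^ 2 * G x) 2 volume := by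
    refine MemLp.of_le (hGm.const_mul (2:ℂ))
      ((continuous_const.mul (hphicc.pow 2)).mul hGc).aestronglyMeasurable
      (Filter.Eventually.of_forall fun x => ?_)
    simp only [norm_mul, norm_pow]
    have h1 := hphin x
    have h2 := norm_nonneg (phiC x)
    have h3 := norm_nonneg (G x)
    have h4 : ‖(2:ℂ)‖ = 2 := by norm_num
    rw [h4]
    have h5 : ‖phiC x‖ ^ 2 ≤ 1 := pow_le_one₀ h2 h1
    linarith only [mul_le_mul_of_nonneg_right h5 h3]
  have hm5 : MemLp (fun x => (phiC x) ^ 2 * (starRingEnd ℂ) (G x)) 2 volume := by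
    refine MemLp.of_le hGm
      ((hphicc.pow 2).mul ((Complex.continuous_conj.comp hGc))).aestronglyMeasurable
      (Filter.Eventually.of_forall fun x => ?_)
    simp only [norm_mul, norm_pow, RCLike.norm_conj]
    have h1 := hphin x
    have h2 := norm_nonneg (phiC x)
    have h3 := norm_nonneg (G x)
    have h5 : ‖phiC x‖ ^ 2 ≤ 1 := pow_le_one₀ h2 h1
    linarith only [mul_le_mul_of_nonneg_right h5 h3]
  have hLm : MemLp L 2 volume :=
    ((((hGm.const_mul _).add (hG1m.const_mul _)).sub (hG2m.const_mul _)).sub hm4).sub hm5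
  -- integrability of squares
  have iG := memL2_int_sq hGm
  have iG1 := memL2_int_sq hG1m
  have iG2 := memL2_int_sq hG2m
  have iL := memL2_int_sq hLm
  have iW := memL2_int_sq hWm
  show Real.sqrt (∫ x : ℝ, ‖G x‖ ^ 2 + ‖G1 x‖ ^ 2 + ‖G2 x‖ ^ 2)
      ≤ (12 * D + 1) * (Real.sqrt (∫ x : ℝ, ‖L x‖ ^ 2) + Real.sqrt (∫ x : ℝ, ‖W x‖ ^ 2))
  clear_value κ t D q G1 G2 L W
  -- norms
  set a : ℝ := Real.sqrt (∫ x : ℝ, ‖G x‖ ^ 2) with hadef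
  set b : ℝ := Real.sqrt (∫ x : ℝ, ‖G1 x‖ ^ 2) with hbdef
  set c : ℝ := Real.sqrt (∫ x : ℝ, ‖G2 x‖ ^ 2) with hcdef
  set m : ℝ := Real.sqrt (∫ x : ℝ, ‖L x‖ ^ 2) with hmdef
  set w : ℝ := Real.sqrt (∫ x : ℝ, ‖W x‖ ^ 2) with hwdef
  have ha0 : 0 ≤ a := Real.sqrt_nonneg _
  have hb0 : 0 ≤ b := Real.sqrt_nonneg _
  have hc0 : 0 ≤ c := Real.sqrt_nonneg _
  have hm0 : 0 ≤ m := Real.sqrt_nonneg _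
  have hw0 : 0 ≤ w := Real.sqrt_nonneg _
  have ha2 : a ^ 2 = ∫ x : ℝ, ‖G x‖ ^ 2 :=
    Real.sq_sqrt (integral_nonneg fun x => by positivity)
  have hb2 : b ^ 2 = ∫ x : ℝ, ‖G1 x‖ ^ 2 :=
    Real.sq_sqrt (integral_nonneg fun x => by positivity)
  have hc2 : c ^ 2 = ∫ x : ℝ, ‖G2 x‖ ^ 2 :=
    Real.sq_sqrt (integral_nonneg fun x => by positivity)
  clear_value a b c m w
  -- integration by parts
  have iu : Integrable (fun x => (G1 x * star (G x)).re) volume := intRe hG1m hGm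
  have iv : Integrable (fun x => (G2 x * star (G x)).re) volume := intRe hG2m hGm
  have igg : Integrable (fun x => (G x * star (G x)).re) volume := intRe hGm hGm
  have key1 : ∀ x, HasDerivAt (fun y => (G y * star (G y)).re)
      (2 * (G1 x * star (G x)).re) x := by
    intro x
    have h := hasDerivAt_cre ((hd1 x).mul (hd1 x).star)
    have he : (G1 x * star (G x) + G x * star (G1 x)).re = 2 * (G1 x * star (G x)).re := by
      rw [Complex.add_re, re_star_comm (G x) (G1 x)]; ring
    rwa [he] at h
  have hu0 : (∫ x : ℝ, (G1 x * star (G x)).re) = 0 := by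
    have h := integral_deriv_zero' (fun x => (G x * star (G x)).re)
      (fun x => 2 * (G1 x * star (G x)).re) key1 igg (iu.const_mul 2)
    rw [integral_const_mul] at h
    linarith only [h]
  have key2 : ∀ x, HasDerivAt (fun y => (G1 y * star (G y)).re)
      ((G2 x * star (G x)).re + ‖G1 x‖ ^ 2) x := by
    intro x
    have h := hasDerivAt_cre ((hd2 x).mul (hd1 x).star)
    have he : (G2 x * star (G x) + G1 x * star (G1 x)).re
        = (G2 x * star (G x)).re + ‖G1 x‖ ^ 2 := by
      rw [Complex.add_re, re_mul_star_self]
    rwa [he] at h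
  have hv0 : (∫ x : ℝ, (G2 x * star (G x)).re) = - ∫ x : ℝ, ‖G1 x‖ ^ 2 := by
    have h := integral_deriv_zero' (fun x => (G1 x * star (G x)).re)
      (fun x => (G2 x * star (G x)).re + ‖G1 x‖ ^ 2) key2 iu (iv.add iG1)
    rw [integral_add iv iG1] at h
    linarith only [h]
  -- the pointwise pairing identity
  set P : ℝ → ℝ := fun x =>
    2 * q x ^ 2 * (G x * star (G x)).re + q x ^ 2 * ((star (G x)) ^ 2).re with hPdef
  have key3 : ∀ x, (L x * star (G x)).re
      = κ * (G x * star (G x)).re + σ * (G1 x * star (G x)).re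
        - (1/2) * (G2 x * star (G x)).re - P x := by
    intro x
    rw [hLdef, hPdef]
    simp only [starRingEnd_apply, hphi]
    exact key_alg κ σ (q x) (G x) (G1 x) (G2 x)
  have iP : Integrable P volume := by
    refine Integrable.mono' (iG.const_mul 3)
      (((continuous_const.mul (hqc.pow 2)).mul
          (Complex.continuous_re.comp ((hGc.mul (continuous_star.comp hGc))))).add
        ((hqc.pow 2).mul
          (Complex.continuous_re.comp ((continuous_star.comp hGc).pow 2)))).aestronglyMeasurable
      (Filter.Eventually.of_forall fun x => ?_)
    rw [Real.norm_eq_abs]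
    have h1 : |(G x * star (G x)).re| ≤ ‖G x‖ ^ 2 := by
      rw [re_mul_star_self, abs_of_nonneg (by positivity)]
    have h2 : |((star (G x)) ^ 2).re| ≤ ‖G x‖ ^ 2 := by
      calc |((star (G x)) ^ 2).re| ≤ ‖(star (G x)) ^ 2‖ := Complex.abs_re_le_norm _
      _ = ‖G x‖ ^ 2 := by rw [norm_pow, norm_star]
    have h3 := hq0 x; have h4 := hq1 x
    calc |P x| = |2 * q x ^ 2 * (G x * star (G x)).re + q x ^ 2 * ((star (G x)) ^ 2).re| := by
          rw [hPdef]
    _ ≤ |2 * q x ^ 2 * (G x * star (G x)).re| + |q x ^ 2 * ((star (G x)) ^ 2).re| := abs_add_le _ _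
    _ = 2 * q x ^ 2 * |(G x * star (G x)).re| + q x ^ 2 * |((star (G x)) ^ 2).re| := by
          rw [abs_mul (2 * q x ^ 2), abs_mul (q x ^ 2),
            abs_of_nonneg (show (0:ℝ) ≤ 2 * q x ^ 2 by positivity),
            abs_of_nonneg (show (0:ℝ) ≤ q x ^ 2 by positivity)]
    _ ≤ 3 * ‖G x‖ ^ 2 := by
          have hq2le : q x ^ 2 ≤ 1 := pow_le_one₀ h3 h4
          have b1 : 2 * q x ^ 2 * |(G x * star (G x)).re| ≤ 2 * ‖G x‖ ^ 2 := by
            have hb := mul_le_mul (by linarith only [hq2le] : 2 * q x ^ 2 ≤ 2) h1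
              (abs_nonneg _) (by norm_num)
            linarith only [hb]
          have b2 : q x ^ 2 * |((star (G x)) ^ 2).re| ≤ ‖G x‖ ^ 2 := by
            have hb := mul_le_mul hq2le h2 (abs_nonneg _) one_pos.le
            linarith only [hb]
          linarith only [b1, b2]
  -- the pairing inequality
  have iA1 : Integrable (fun x => κ * (G x * star (G x)).re) volume := igg.const_mul κ
  have iA2 : Integrable (fun x => σ * (G1 x * star (G x)).re) volume := iu.const_mul σ
  have iA3 : Integrable (fun x => (1/2) * (G2 x * star (G x)).re) volume := iv.const_mul (1/2)
  have iA12 : Integrable (fun x => κ * (G x * star (G x)).re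
      + σ * (G1 x * star (G x)).re) volume := iA1.add iA2
  have iA123 : Integrable (fun x => κ * (G x * star (G x)).re
      + σ * (G1 x * star (G x)).re - (1/2) * (G2 x * star (G x)).re) volume := iA12.sub iA3
  have hpair : ∫ x : ℝ, (L x * star (G x)).re
      = κ * (∫ x : ℝ, (G x * star (G x)).re) + σ * (∫ x : ℝ, (G1 x * star (G x)).re)
        - (1/2) * (∫ x : ℝ, (G2 x * star (G x)).re) - ∫ x : ℝ, P x := by
    calc ∫ x : ℝ, (L x * star (G x)).re
        = ∫ x : ℝ, (κ * (G x * star (G x)).re + σ * (G1 x * star (G x)).re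
            - (1/2) * (G2 x * star (G x)).re - P x) :=
          integral_congr_ae (Filter.Eventually.of_forall fun x => key3 x)
    _ = (∫ x : ℝ, (κ * (G x * star (G x)).re + σ * (G1 x * star (G x)).re
            - (1/2) * (G2 x * star (G x)).re)) - ∫ x : ℝ, P x := integral_sub iA123 iP
    _ = ((∫ x : ℝ, (κ * (G x * star (G x)).re + σ * (G1 x * star (G x)).re))
            - ∫ x : ℝ, (1/2) * (G2 x * star (G x)).re) - ∫ x : ℝ, P x := by
          rw [integral_sub iA12 iA3]
    _ = (((∫ x : ℝ, κ * (G x * star (G x)).re) + ∫ x : ℝ, σ * (G1 x * star (G x)).re)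
            - ∫ x : ℝ, (1/2) * (G2 x * star (G x)).re) - ∫ x : ℝ, P x := by
          rw [integral_add iA1 iA2]
    _ = κ * (∫ x : ℝ, (G x * star (G x)).re) + σ * (∫ x : ℝ, (G1 x * star (G x)).re)
        - (1/2) * (∫ x : ℝ, (G2 x * star (G x)).re) - ∫ x : ℝ, P x := by
          rw [integral_const_mul, integral_const_mul, integral_const_mul]
  have hgg_eq : (∫ x : ℝ, (G x * star (G x)).re) = a ^ 2 := by
    rw [ha2]; exact integral_congr_ae (Filter.Eventually.of_forall fun x => re_mul_star_self _)
  have hLG_le : (∫ x : ℝ, (L x * star (G x)).re) ≤ m * a := by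
    have h := intRe_bound hLm hGm
    rw [← hmdef, ← hadef] at h
    exact h
  have hP_le : (∫ x : ℝ, P x) ≤ 12 * (w * a) := by
    have hptP : ∀ x, P x ≤ 12 * (‖W x‖ * ‖G x‖) := by
      intro x
      have h1 : (G x * star (G x)).re = ‖G x‖ ^ 2 := re_mul_star_self _
      have h2 : ((star (G x)) ^ 2).re ≤ ‖G x‖ ^ 2 := by
        calc ((star (G x)) ^ 2).re ≤ |((star (G x)) ^ 2).re| := le_abs_self _
        _ ≤ ‖(star (G x)) ^ 2‖ := Complex.abs_re_le_norm _
        _ = ‖G x‖ ^ 2 := by rw [norm_pow, norm_star]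
      have h3 : ‖W x‖ = Real.exp (-2 * |x|) * ‖G x‖ := by
        rw [hWdef]
        simp only [norm_mul, Complex.norm_real, Real.norm_eq_abs, Real.abs_exp]
      have h7 : q x ^ 2 ≤ 4 * Real.exp (-2 * |x|) := hq4 x
      simp only [hPdef, h3]
      rw [h1]
      have e2 : q x ^ 2 * ((star (G x)) ^ 2).re ≤ q x ^ 2 * ‖G x‖ ^ 2 :=
        mul_le_mul_of_nonneg_left h2 (sq_nonneg _)
      have e3 : q x ^ 2 * ‖G x‖ ^ 2 ≤ (4 * Real.exp (-2 * |x|)) * ‖G x‖ ^ 2 :=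
        mul_le_mul_of_nonneg_right h7 (sq_nonneg _)
      have e4 : (4 * Real.exp (-2 * |x|)) * ‖G x‖ ^ 2
          = 4 * (Real.exp (-2 * |x|) * ‖G x‖ * ‖G x‖) := by ring
      rw [e4] at e3
      linarith only [e2, e3]
    calc (∫ x : ℝ, P x) ≤ ∫ x : ℝ, 12 * (‖W x‖ * ‖G x‖) :=
          integral_mono iP ((mul_norm_integrable hWm hGm).const_mul 12) hptP
    _ = 12 * ∫ x : ℝ, ‖W x‖ * ‖G x‖ := integral_const_mul _ _
    _ ≤ 12 * (w * a) := by
        have h := cs2 hWm hGm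
        rw [← hwdef, ← hadef] at h
        linarith only [h]
  have hco : κ * a ^ 2 + (1/2) * b ^ 2 ≤ m * a + 12 * (w * a) := by
    have h := hpair
    rw [hu0, hv0, hgg_eq, ← hb2] at h
    have : κ * a ^ 2 + (1/2) * b ^ 2 = (∫ x : ℝ, (L x * star (G x)).re) + ∫ x : ℝ, P x := by
      rw [h]; ring
    rw [this]
    exact add_le_add hLG_le hP_le
  -- second-derivative bound
  have hptw : ∀ x, ‖G2 x‖ ≤ 2*‖L x‖ + (2*κ+6)*‖G x‖ + 2*|σ| * ‖G1 x‖ := by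
    intro x
    have hx : G2 x = (2:ℂ)*(((κ : ℝ) : ℂ) * G x) + (2:ℂ)*((σ:ℂ) * G1 x)
        - (2:ℂ)*(2 * (phiC x) ^ 2 * G x) - (2:ℂ)*((phiC x) ^ 2 * (starRingEnd ℂ) (G x))
        - (2:ℂ)*(L x) := by
      rw [hLdef]; ring
    have h2n : ‖(2:ℂ)‖ = 2 := by norm_num
    have e1 : ‖(2:ℂ)*(((κ : ℝ) : ℂ) * G x)‖ = 2*(κ*‖G x‖) := by
      rw [norm_mul, norm_mul, h2n, Complex.norm_real, Real.norm_eq_abs,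
        abs_of_nonneg (le_of_lt hκ)]
    have e2 : ‖(2:ℂ)*((σ:ℂ) * G1 x)‖ = 2*(|σ| * ‖G1 x‖) := by
      rw [norm_mul, norm_mul, h2n, Complex.norm_real, Real.norm_eq_abs]
    have e3 : ‖(2:ℂ)*(2 * (phiC x) ^ 2 * G x)‖ ≤ 4*‖G x‖ := by
      rw [norm_mul, norm_mul, norm_mul, h2n, norm_pow]
      have h5 := hphin x
      have h6 := norm_nonneg (G x); have h7 := norm_nonneg (phiC x)
      have h9 : ‖phiC x‖ ^ 2 ≤ 1 := pow_le_one₀ h7 h5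
      linarith only [mul_le_mul_of_nonneg_right h9 h6]
    have e4 : ‖(2:ℂ)*((phiC x) ^ 2 * (starRingEnd ℂ) (G x))‖ ≤ 2*‖G x‖ := by
      rw [norm_mul, norm_mul, h2n, norm_pow, RCLike.norm_conj]
      have h5 := hphin x
      have h6 := norm_nonneg (G x); have h7 := norm_nonneg (phiC x)
      have h9 : ‖phiC x‖ ^ 2 ≤ 1 := pow_le_one₀ h7 h5
      linarith only [mul_le_mul_of_nonneg_right h9 h6]
    have e5 : ‖(2:ℂ)*(L x)‖ = 2*‖L x‖ := by rw [norm_mul, h2n]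
    calc ‖G2 x‖
        = ‖(2:ℂ)*(((κ : ℝ) : ℂ) * G x) + (2:ℂ)*((σ:ℂ) * G1 x)
            - (2:ℂ)*(2 * (phiC x) ^ 2 * G x) - (2:ℂ)*((phiC x) ^ 2 * (starRingEnd ℂ) (G x))
            - (2:ℂ)*(L x)‖ := by rw [hx]
    _ ≤ ‖(2:ℂ)*(((κ : ℝ) : ℂ) * G x)‖ + ‖(2:ℂ)*((σ:ℂ) * G1 x)‖
          + ‖(2:ℂ)*(2 * (phiC x) ^ 2 * G x)‖ + ‖(2:ℂ)*((phiC x) ^ 2 * (starRingEnd ℂ) (G x))‖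
          + ‖(2:ℂ)*(L x)‖ := tri5 _ _ _ _ _
    _ ≤ 2*‖L x‖ + (2*κ+6)*‖G x‖ + 2*|σ| * ‖G1 x‖ := by
        rw [e1, e2, e5]
        have h6 := norm_nonneg (G x)
        linarith only [e3, e4, h6]
  have hcsq : c^2 ≤ 2*(m*c) + (2*κ+6)*(a*c) + 2*|σ| * (b*c) := by
    have hpt2 : ∀ x, ‖G2 x‖^2 ≤ 2*(‖L x‖*‖G2 x‖) + (2*κ+6)*(‖G x‖*‖G2 x‖)
        + 2*|σ| * (‖G1 x‖*‖G2 x‖) := by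
      intro x
      have h := mul_le_mul_of_nonneg_right (hptw x) (norm_nonneg (G2 x))
      linarith only [h]
    have hint : Integrable (fun x => 2*(‖L x‖*‖G2 x‖) + (2*κ+6)*(‖G x‖*‖G2 x‖)
        + 2*|σ| * (‖G1 x‖*‖G2 x‖)) volume :=
      (((mul_norm_integrable hLm hG2m).const_mul 2).add
        ((mul_norm_integrable hGm hG2m).const_mul (2*κ+6))).add
        ((mul_norm_integrable hG1m hG2m).const_mul (2*|σ|))
    have h1 : c^2 ≤ ∫ x : ℝ, (2*(‖L x‖*‖G2 x‖) + (2*κ+6)*(‖G x‖*‖G2 x‖)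
        + 2*|σ| * (‖G1 x‖*‖G2 x‖)) := by
      rw [hc2]
      exact integral_mono iG2 hint hpt2
    have iB1 : Integrable (fun x => 2*(‖L x‖*‖G2 x‖)) volume :=
      (mul_norm_integrable hLm hG2m).const_mul 2
    have iB2 : Integrable (fun x => (2*κ+6)*(‖G x‖*‖G2 x‖)) volume :=
      (mul_norm_integrable hGm hG2m).const_mul (2*κ+6)
    have iB3 : Integrable (fun x => 2*|σ| * (‖G1 x‖*‖G2 x‖)) volume :=
      (mul_norm_integrable hG1m hG2m).const_mul (2*|σ|)
    have iB12 : Integrable (fun x => 2*(‖L x‖*‖G2 x‖) + (2*κ+6)*(‖G x‖*‖G2 x‖)) volume :=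
      iB1.add iB2
    have h2 : (∫ x : ℝ, (2*(‖L x‖*‖G2 x‖) + (2*κ+6)*(‖G x‖*‖G2 x‖)
        + 2*|σ| * (‖G1 x‖*‖G2 x‖)))
        = 2*(∫ x : ℝ, ‖L x‖*‖G2 x‖) + (2*κ+6)*(∫ x : ℝ, ‖G x‖*‖G2 x‖)
          + 2*|σ| * (∫ x : ℝ, ‖G1 x‖*‖G2 x‖) := by
      rw [integral_add iB12 iB3, integral_add iB1 iB2,
        integral_const_mul, integral_const_mul, integral_const_mul]
    have c1 := cs2 hLm hG2m
    have c2 := cs2 hGm hG2m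
    have c3 := cs2 hG1m hG2m
    rw [← hmdef, ← hcdef] at c1
    rw [← hadef, ← hcdef] at c2
    rw [← hbdef, ← hcdef] at c3
    have hk6 : (0:ℝ) ≤ 2*κ+6 := by linarith only [hκ]
    calc c^2 ≤ _ := h1
    _ = _ := h2
    _ ≤ 2*(m*c) + (2*κ+6)*(a*c) + 2*|σ| * (b*c) := by
        have t1 := mul_le_mul_of_nonneg_left c1 (by norm_num : (0:ℝ) ≤ 2)
        have t2 := mul_le_mul_of_nonneg_left c2 hk6
        have t3 := mul_le_mul_of_nonneg_left c3 (by positivity : (0:ℝ) ≤ 2*|σ|)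
        linarith only [t1, t2, t3]
  -- numeric endgame
  have hMW0 : 0 ≤ m + 12*w := by linarith only [hm0, hw0]
  have haK : a ≤ (1/κ) * (m + 12*w) := by
    rcases eq_or_lt_of_le ha0 with h | h
    · rw [← h]
      exact mul_nonneg (le_of_lt h1κ) hMW0
    · have h1 : (κ*a)*a ≤ (m + 12*w)*a := by linarith only [hco, sq_nonneg b]
      have h2 : κ*a ≤ m + 12*w := le_of_mul_le_mul_right h1 h
      calc a = (1/κ) * (κ * a) := by
            rw [one_div, inv_mul_cancel_left₀ (ne_of_gt hκ)]
      _ ≤ (1/κ) * (m + 12*w) := mul_le_mul_of_nonneg_left h2 (le_of_lt h1κ)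
  have hbK : b ≤ t * (m + 12*w) := by
    have h1 : b^2 ≤ 2 * ((m + 12*w) * a) := by
      linarith only [hco, mul_nonneg (le_of_lt hκ) (sq_nonneg a)]
    have h2 : b^2 ≤ (t * (m + 12*w))^2 := by
      have h3 : a * (m + 12*w) ≤ (1/κ) * (m + 12*w) * (m + 12*w) :=
        mul_le_mul_of_nonneg_right haK hMW0
      have h4 : (t * (m + 12*w))^2 = (2/κ) * ((m+12*w)*(m+12*w)) := by
        rw [mul_pow, ht2]; ring
      rw [h4]
      have h6 : (2/κ) * ((m+12*w)*(m+12*w)) = 2*((1/κ)*(m+12*w)*(m+12*w)) := by ring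
      rw [h6]
      linarith only [h1, h3]
    have h5 := Real.sqrt_le_sqrt (le_of_lt (lt_of_le_of_lt h2 (lt_add_one _)))
    -- use monotone sqrt directly
    have h6 : b ≤ t * (m + 12*w) := by
      have hb' : b = Real.sqrt (b^2) := (Real.sqrt_sq hb0).symm
      have ht' : t * (m + 12*w) = Real.sqrt ((t * (m + 12*w))^2) :=
        (Real.sqrt_sq (mul_nonneg ht0 hMW0)).symm
      rw [hb', ht']
      exact Real.sqrt_le_sqrt h2
    exact h6
  have hcK : c ≤ 2*m + (2*κ+6)*a + 2*|σ| * b := by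
    rcases eq_or_lt_of_le hc0 with h | h
    · rw [← h]
      have t2 : 0 ≤ (2*κ+6)*a := mul_nonneg (by linarith only [hκ]) ha0
      have t3 : 0 ≤ 2*|σ| * b := mul_nonneg (by positivity) hb0
      linarith only [t2, t3, hm0]
    · have h1 : c*c ≤ (2*m + (2*κ+6)*a + 2*|σ| * b)*c := by linarith only [hcsq]
      exact le_of_mul_le_mul_right h1 h
  -- assemble
  have iGG1 : Integrable (fun x => ‖G x‖^2 + ‖G1 x‖^2) volume := iG.add iG1
  have hsplit : (∫ x : ℝ, (‖G x‖^2 + ‖G1 x‖^2 + ‖G2 x‖^2)) = a^2 + b^2 + c^2 := by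
    rw [integral_add iGG1 iG2, integral_add iG iG1, ha2, hb2, hc2]
  have hLHS : Real.sqrt (∫ x : ℝ, (‖G x‖^2 + ‖G1 x‖^2 + ‖G2 x‖^2)) ≤ a + b + c := by
    rw [hsplit]
    have h1 : a^2 + b^2 + c^2 ≤ (a+b+c)^2 := by
      linarith only [mul_nonneg ha0 hb0, mul_nonneg ha0 hc0, mul_nonneg hb0 hc0]
    calc Real.sqrt (a^2+b^2+c^2) ≤ Real.sqrt ((a+b+c)^2) := Real.sqrt_le_sqrt h1
    _ = a+b+c := Real.sqrt_sq (by positivity)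
  have hsum : a + b + c ≤ D * (m + 12*w) := by
    have hcK2 : c ≤ 2*(m+12*w) + (2*κ+6)*((1/κ)*(m+12*w)) + 2*(t*(m+12*w)) := by
      have h1 : 2*m ≤ 2*(m+12*w) := by linarith only [hw0]
      have h2 : (2*κ+6)*a ≤ (2*κ+6)*((1/κ)*(m+12*w)) :=
        mul_le_mul_of_nonneg_left haK (by linarith only [hκ])
      have h3 : 2*|σ| * b ≤ 2*b := by
        have hb := mul_le_mul_of_nonneg_right (le_of_lt hσ) hb0
        linarith only [hb]
      have h4 : 2*b ≤ 2*(t*(m+12*w)) := by linarith only [hbK]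
      linarith only [h1, h2, h3, h4, hcK]
    rw [hDdef]
    linarith only [hcK2, haK, hbK]
  have hfin : D * (m + 12*w) ≤ (12*D + 1) * (m + w) := by
    have h1 : m + 12*w ≤ 12*(m+w) := by linarith only [hm0]
    have h2 := mul_le_mul_of_nonneg_left h1 (le_of_lt hD0)
    linarith only [h2, hm0, hw0]
  calc Real.sqrt (∫ x : ℝ, (‖G x‖^2 + ‖G1 x‖^2 + ‖G2 x‖^2)) ≤ a + b + c := hLHS
  _ ≤ D * (m + 12*w) := hsum
  _ ≤ (12*D + 1) * (m + w) := hfin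
end
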